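/- (Contrapositive form of Proposition 1, for a smooth boundary point modeled by a supporting half-space.) Let x ∈ M and let U be an open neighborhood of x and N ∈ ℝ³ a nonzero vector such that M ∩ U = {y ∈ ℝ³ : ⟨N, y − x⟩ ≤ 0} ∩ U. Assume A and b are continuous on ℝ and differentiable at t' ∈ I, and set v = γ_x'(t') and G = ⟨A(t')·N, v⟩. If either (t₀ < t' < t₁ and G ≠ 0), or (t' = t₀ and G > 0), or (t' = t₁ and G < 0), then γ_x(t') lies in the interior of the swept volume V = ⋃_{t∈I} M(t); in particular γ_x(t') is not on the envelope E. -/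

import Mathlib

open RealInnerProductSpace Matrix

/-- The action of a matrix on a point of `ℝ³ = EuclideanSpace ℝ (Fin 3)`. -/
noncomputable def act (A : Matrix (Fin 3) (Fin 3) ℝ) (x : EuclideanSpace ℝ (Fin 3)) :
    EuclideanSpace ℝ (Fin 3) := Matrix.toEuclideanLin A x

lemma inner_act (A : Matrix (Fin 3) (Fin 3) ℝ) (u w : EuclideanSpace ℝ (Fin 3)) :
    ⟪u, act A w⟫ = ⟪act Aᵀ u, w⟫ := by
  simp only [PiLp.inner_apply, RCLike.inner_apply, conj_trivial]
  show ∑ i, (∑ j, A i j * w j) * u i = ∑ j, w j * (∑ i, Aᵀ j i * u i)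
  simp only [Finset.mul_sum, Finset.sum_mul, Matrix.transpose_apply]
  rw [Finset.sum_comm]
  exact Finset.sum_congr rfl fun i _ => Finset.sum_congr rfl fun j _ => by ring

lemma inner_act_transpose (A : Matrix (Fin 3) (Fin 3) ℝ) (u w : EuclideanSpace ℝ (Fin 3)) :
    ⟪u, act Aᵀ w⟫ = ⟪act A u, w⟫ := by
  rw [inner_act, Matrix.transpose_transpose]

lemma act_act (A B : Matrix (Fin 3) (Fin 3) ℝ) (w : EuclideanSpace ℝ (Fin 3)) :
    act A (act B w) = act (A * B) w := by
  simp [act, Matrix.toEuclideanLin_apply, Matrix.mulVec_mulVec]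

lemma act_one (w : EuclideanSpace ℝ (Fin 3)) : act 1 w = w := by
  simp [act, Matrix.toEuclideanLin_apply]

lemma eventually_neg_right {F : ℝ → ℝ} {d t' : ℝ} (hF : HasDerivAt F d t') (h0 : F t' = 0)
    (hd : d < 0) : ∀ᶠ t in nhdsWithin t' (Set.Ioi t'), F t < 0 := by
  have hs := hasDerivAt_iff_tendsto_slope.mp hF
  have h1 : ∀ᶠ t in nhdsWithin t' {t'}ᶜ, slope F t' t < 0 := hs.eventually (Iio_mem_nhds hd)
  have h2 : ∀ᶠ t in nhdsWithin t' (Set.Ioi t'), slope F t' t < 0 :=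
    h1.filter_mono (nhdsWithin_mono _ fun y hy => ne_of_gt hy)
  filter_upwards [h2, self_mem_nhdsWithin] with t hslope (htt : t ∈ Set.Ioi t')
  have h4 : (t - t')⁻¹ * F t < 0 := by simpa [slope, h0] using hslope
  have h3 : 0 < (t - t')⁻¹ := inv_pos.mpr (sub_pos.mpr htt)
  by_contra hc
  push_neg at hc
  nlinarith

lemma eventually_neg_left {F : ℝ → ℝ} {d t' : ℝ} (hF : HasDerivAt F d t') (h0 : F t' = 0)
    (hd : 0 < d) : ∀ᶠ t in nhdsWithin t' (Set.Iio t'), F t < 0 := by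
  have hs := hasDerivAt_iff_tendsto_slope.mp hF
  have h1 : ∀ᶠ t in nhdsWithin t' {t'}ᶜ, 0 < slope F t' t := hs.eventually (Ioi_mem_nhds hd)
  have h2 : ∀ᶠ t in nhdsWithin t' (Set.Iio t'), 0 < slope F t' t :=
    h1.filter_mono (nhdsWithin_mono _ fun y hy => ne_of_lt hy)
  filter_upwards [h2, self_mem_nhdsWithin] with t hslope (htt : t ∈ Set.Iio t')
  have h4 : 0 < (t - t')⁻¹ * F t := by simpa [slope, h0] using hslope
  have h3 : (t - t')⁻¹ < 0 := inv_neg''.mpr (sub_neg.mpr htt)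
  by_contra hc
  push_neg at hc
  nlinarith

lemma act_cont (A : ℝ → Matrix (Fin 3) (Fin 3) ℝ) (hAcont : Continuous A)
    (w : EuclideanSpace ℝ (Fin 3)) : Continuous fun t => act (A t) w := by
  have h1 : Continuous fun t => (A t) *ᵥ (WithLp.equiv 2 (Fin 3 → ℝ) w) :=
    hAcont.matrix_mulVec continuous_const
  exact (PiLp.continuous_toLp 2 (fun _ : Fin 3 => ℝ)).comp h1

/-- Contrapositive form of Proposition 1, for a smooth boundary point modeled by a
supporting half-space: if `M ∩ U = {y : ⟪N, y - x⟫ ≤ 0} ∩ U` near `x ∈ M` and the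
function `G = ⟪A(t')·N, γ_x'(t')⟫` satisfies `G ≠ 0` at an interior time, `G > 0` at `t₀`,
or `G < 0` at `t₁`, then `γ_x(t')` lies in the interior of the swept volume; in particular
it is not on the envelope. -/
theorem interior_of_sweep_of_smooth_nonzero_G
    (A : ℝ → Matrix (Fin 3) (Fin 3) ℝ) (b : ℝ → EuclideanSpace ℝ (Fin 3))
    (hA : ∀ t, (A t)ᵀ * A t = 1)
    (hAcont : Continuous A) (hbcont : Continuous b)
    (M : Set (EuclideanSpace ℝ (Fin 3)))
    (t₀ t₁ : ℝ) (ht : t₀ < t₁)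
    (x : EuclideanSpace ℝ (Fin 3)) (hxM : x ∈ M)
    (U : Set (EuclideanSpace ℝ (Fin 3))) (hU : IsOpen U) (hxU : x ∈ U)
    (N : EuclideanSpace ℝ (Fin 3)) (hN : N ≠ 0)
    (hMU : M ∩ U = {y : EuclideanSpace ℝ (Fin 3) | ⟪N, y - x⟫ ≤ 0} ∩ U)
    (t' : ℝ) (ht' : t' ∈ Set.Icc t₀ t₁)
    (hAdiff : ∀ i j, DifferentiableAt ℝ (fun t => A t i j) t')
    (hbdiff : DifferentiableAt ℝ b t')
    (v : EuclideanSpace ℝ (Fin 3))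
    (hv : HasDerivAt (fun t => act (A t) x + b t) v t')
    (hG : (t₀ < t' ∧ t' < t₁ ∧ ⟪act (A t') N, v⟫ ≠ 0) ∨
          (t' = t₀ ∧ 0 < ⟪act (A t') N, v⟫) ∨
          (t' = t₁ ∧ ⟪act (A t') N, v⟫ < 0)) :
    act (A t') x + b t' ∈
        interior (⋃ t ∈ Set.Icc t₀ t₁, (fun y => act (A t) y + b t) '' M) ∧
      act (A t') x + b t' ∉
        frontier (⋃ t ∈ Set.Icc t₀ t₁, (fun y => act (A t) y + b t) '' M) := by
  classical
  set V := ⋃ t ∈ Set.Icc t₀ t₁, (fun y => act (A t) y + b t) '' M with hVdef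
  set p := act (A t') x + b t' with hp
  -- differentiability of t ↦ A(t)·N
  have hfd : DifferentiableAt ℝ (fun t => act (A t) N) t' := by
    have h1 : DifferentiableAt ℝ
        (fun t => ((A t) *ᵥ (WithLp.equiv 2 (Fin 3 → ℝ) N) : Fin 3 → ℝ)) t' := by
      rw [differentiableAt_pi]
      intro i
      simp only [Matrix.mulVec, dotProduct]
      exact DifferentiableAt.fun_sum fun j _ => (hAdiff i j).mul_const _
    have h2 := (WithLp.linearEquiv 2 ℝ (Fin 3 → ℝ)).symm.toLinearMap.toContinuousLinearMap.differentiable.differentiableAt (x := A t' *ᵥ (WithLp.equiv 2 (Fin 3 → ℝ)) N)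
    exact h2.comp t' h1
  -- the sign function F and its derivative
  have hgd : HasDerivAt (fun t => p - (act (A t) x + b t)) (-v) t' := by
    simpa using (hasDerivAt_const t' p).fun_sub hv
  have hFd : HasDerivAt (fun t => ⟪act (A t) N, p - (act (A t) x + b t)⟫)
      (-⟪act (A t') N, v⟫) t' := by
    have h := HasDerivAt.inner ℝ hfd.hasDerivAt hgd
    have h0 : p - (act (A t') x + b t') = 0 := by rw [← hp]; exact sub_self p
    simpa [h0] using h
  have hF0 : ⟪act (A t') N, p - (act (A t') x + b t')⟫ = (0 : ℝ) := by
    rw [← hp, sub_self, inner_zero_right]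
  -- continuity of the preimage point
  have hqcont : Continuous fun t => act (A t)ᵀ (p - b t) := by
    have h1 : Continuous fun t => (A t)ᵀ *ᵥ (WithLp.equiv 2 (Fin 3 → ℝ) (p - b t)) :=
      (hAcont.matrix_transpose).matrix_mulVec
        ((PiLp.continuous_ofLp 2 (fun _ : Fin 3 => ℝ)).comp (continuous_const.sub hbcont))
    exact (PiLp.continuous_toLp 2 (fun _ : Fin 3 => ℝ)).comp h1
  have hqt' : act (A t')ᵀ (p - b t') = x := by
    have h1 : p - b t' = act (A t') x := by rw [hp]; abel
    rw [h1, act_act, hA t', act_one]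
  have hqU : ∀ᶠ t in nhds t', act (A t)ᵀ (p - b t) ∈ U := by
    have := hqcont.continuousAt (x := t')
    exact this.preimage_mem_nhds (by rw [hqt']; exact hU.mem_nhds hxU)
  -- the key construction: any admissible time s gives interior membership
  have key : ∀ s ∈ Set.Icc t₀ t₁, ⟪act (A s) N, p - (act (A s) x + b s)⟫ < 0 →
      act (A s)ᵀ (p - b s) ∈ U → p ∈ interior V := by
    intro s hsI hsF hsU
    set W := {z : EuclideanSpace ℝ (Fin 3) | ⟪act (A s) N, z - (act (A s) x + b s)⟫ < 0} ∩
      ((fun z => act (A s)ᵀ (z - b s)) ⁻¹' U) with hW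
    refine mem_interior.mpr ⟨W, ?_, ?_, ?_⟩
    · rintro z ⟨hz1, hz2⟩
      set y := act (A s)ᵀ (z - b s) with hy
      have hyU : y ∈ U := hz2
      have hNy : ⟪N, y - x⟫ = ⟪act (A s) N, z - (act (A s) x + b s)⟫ := by
        have e1 : ⟪N, y⟫ = ⟪act (A s) N, z - b s⟫ := by
          rw [hy, inner_act_transpose]
        have e2 : (⟪N, x⟫ : ℝ) = ⟪act (A s) N, act (A s) x⟫ := by
          have hx1 : x = act (A s)ᵀ (act (A s) x) := by
            rw [act_act, hA s, act_one]
          calc (⟪N, x⟫ : ℝ) = ⟪N, act (A s)ᵀ (act (A s) x)⟫ := by rw [← hx1]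
            _ = ⟪act (A s) N, act (A s) x⟫ := inner_act_transpose _ _ _
        rw [inner_sub_right, e1, e2, ← inner_sub_right]
        congr 1
        abel
      have hyM : y ∈ M := by
        have hlt0 : ⟪N, y - x⟫ < (0 : ℝ) := by rw [hNy]; exact hz1
        have h2 : y ∈ ({y : EuclideanSpace ℝ (Fin 3) | ⟪N, y - x⟫ ≤ 0} ∩ U) :=
          ⟨le_of_lt hlt0, hyU⟩
        rw [← hMU] at h2
        exact h2.1
      have hz : act (A s) y + b s = z := by
        rw [hy, act_act, mul_eq_one_comm.mp (hA s), act_one]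
        abel
      exact Set.mem_biUnion hsI ⟨y, hyM, hz⟩
    · apply IsOpen.inter
      · exact isOpen_lt (Continuous.inner continuous_const
          (continuous_id.sub continuous_const)) continuous_const
      · exact hU.preimage ((Matrix.toEuclideanLin ((A s)ᵀ)).continuous_of_finiteDimensional.comp
          (continuous_id.sub continuous_const))
    · exact ⟨hsF, hsU⟩
  -- reduce the hypotheses to two sided cases
  have hG' : (t' < t₁ ∧ 0 < ⟪act (A t') N, v⟫) ∨ (t₀ < t' ∧ ⟪act (A t') N, v⟫ < 0) := by
    rcases hG with ⟨h0, h1, hne⟩ | ⟨he, hpos⟩ | ⟨he, hneg⟩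
    · rcases hne.lt_or_gt with h | h
      · exact Or.inr ⟨h0, h⟩
      · exact Or.inl ⟨h1, h⟩
    · exact Or.inl ⟨by rw [he]; exact ht, hpos⟩
    · exact Or.inr ⟨by rw [he]; exact ht, hneg⟩
  rcases hG' with ⟨hlt, hpos⟩ | ⟨hgt, hneg⟩
  · have hFneg := eventually_neg_right hFd hF0 (by linarith)
    have hIcc : ∀ᶠ t in nhdsWithin t' (Set.Ioi t'), t ∈ Set.Icc t₀ t₁ := by
      filter_upwards [Ioo_mem_nhdsGT_of_mem ⟨le_refl t', hlt⟩] with t ht2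
      exact ⟨le_trans ht'.1 ht2.1.le, ht2.2.le⟩
    have hqU' : ∀ᶠ t in nhdsWithin t' (Set.Ioi t'), act (A t)ᵀ (p - b t) ∈ U :=
      hqU.filter_mono nhdsWithin_le_nhds
    obtain ⟨s, hsI, hsF, hsU⟩ := (hIcc.and (hFneg.and hqU')).exists
    have hint := key s hsI hsF hsU
    exact ⟨hint, fun hfr => hfr.2 hint⟩
  · have hFneg := eventually_neg_left hFd hF0 (by linarith)
    have hIcc : ∀ᶠ t in nhdsWithin t' (Set.Iio t'), t ∈ Set.Icc t₀ t₁ := by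
      filter_upwards [Ioo_mem_nhdsLT_of_mem ⟨hgt, le_refl t'⟩] with t ht2
      exact ⟨ht2.1.le, le_trans ht2.2.le ht'.2⟩
    have hqU' : ∀ᶠ t in nhdsWithin t' (Set.Iio t'), act (A t)ᵀ (p - b t) ∈ U :=
      hqU.filter_mono nhdsWithin_le_nhds
    obtain ⟨s, hsI, hsF, hsU⟩ := (hIcc.and (hFneg.and hqU')).exists
    have hint := key s hsI hsF hsU
    exact ⟨hint, fun hfr => hfr.2 hint⟩
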